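/- arXiv:1612.04541 — 2 statements merged into one kernel-verified Lean document; each statement's English description precedes it below -/
import Mathlib

section
/- (Lemma 3.2) Assume a₃₃ ≠ 0 and define j = a₀ − (a₀₃/a₃₃)a₃, e = a₁ − (a₁₃/a₃₃)a₃, and q = a₂ − (a₂₃/a₃₃)a₃. Then: ⟨j,j⟩ = ⟨j,a₀⟩ = (a₀₀a₃₃ − a₀₃²)/a₃₃ = sin²(π/v)/(B·a₃₃) = sin²(π/v)/(sin²(π/u) − cos²(π/v)); ⟨e,e⟩ = ⟨e,a₁⟩ = (a₁₁a₃₃ − a₁₃²)/a₃₃ = 1/(B·a₃₃) = 1/(sin²(π/u) − cos²(π/v)); and ⟨q,q⟩ = ⟨q,a₂⟩ = (a₂₂a₃₃ − a₂₃²)/a₃₃ = a₂₂/a₃₃ = sin²(π/u)/(sin²(π/u) − cos²(π/v)). -/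
open Real Matrix

/-- The Coxeter–Schläfli matrix of the complete orthoscheme `W_{uvw}`. -/
noncomputable def CSmatrix (u v w : ℝ) : Matrix (Fin 4) (Fin 4) ℝ :=
  !![1, -cos (π/u), 0, 0;
     -cos (π/u), 1, -cos (π/v), 0;
     0, -cos (π/v), 1, -cos (π/w);
     0, 0, -cos (π/w), 1]

/-- The inverse of the Coxeter–Schläfli matrix; its entries are the `a_{ij}`. -/
noncomputable def CSinv (u v w : ℝ) : Matrix (Fin 4) (Fin 4) ℝ :=
  (CSmatrix u v w)⁻¹

/-- Explicit adjugate of the Coxeter–Schläfli matrix. -/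
noncomputable def CSadj (u v w : ℝ) : Matrix (Fin 4) (Fin 4) ℝ :=
  let c1 := cos (π/u); let c2 := cos (π/v); let c3 := cos (π/w)
  !![1-c2^2-c3^2, c1*(1-c3^2), c1*c2, c1*c2*c3;
     c1*(1-c3^2), 1-c3^2, c2, c2*c3;
     c1*c2, c2, 1-c1^2, c3*(1-c1^2);
     c1*c2*c3, c2*c3, c3*(1-c1^2), 1-c1^2-c2^2]

lemma det_CS (u v w : ℝ) : (CSmatrix u v w).det =
    1 - cos (π/u)^2 - cos (π/v)^2 - cos (π/w)^2 + cos (π/u)^2 * cos (π/w)^2 := by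
  simp [CSmatrix, Matrix.det_succ_row_zero, Fin.sum_univ_succ, Fin.succAbove]
  ring

lemma mulAdj (u v w : ℝ) :
    CSmatrix u v w * CSadj u v w = (CSmatrix u v w).det • 1 := by
  rw [det_CS]
  ext i j
  fin_cases i <;> fin_cases j <;>
    simp [CSmatrix, CSadj, Matrix.mul_apply, Fin.sum_univ_four, Matrix.one_apply] <;> ring

lemma CSinv_eq (u v w : ℝ) (hdet : (CSmatrix u v w).det ≠ 0) :
    CSinv u v w = ((CSmatrix u v w).det)⁻¹ • CSadj u v w := by
  refine Matrix.inv_eq_right_inv ?_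
  rw [Matrix.mul_smul, mulAdj, smul_smul, inv_mul_cancel₀ hdet, one_smul]

lemma zero_aux (a03 a33 : ℝ) (h : a33 ≠ 0) : a03 - a03 / a33 * a33 = 0 := by
  field_simp
  ring

lemma div_aux (a00 a03 a33 : ℝ) (h : a33 ≠ 0) :
    a00 - a03 / a33 * a03 = (a00 * a33 - a03 ^ 2) / a33 := by
  field_simp

lemma gen (A B C D x : ℝ) (hD : D ≠ 0) (hC : C ≠ 0) (h : A*C - B^2 = x*D) :
    (A/D * (C/D) - (B/D)^2) / (C/D) = x / C := by
  rw [div_mul_div_comm, div_pow, show D*D = D^2 by ring, div_sub_div_same, h,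
    div_div_div_eq, div_eq_div_iff (by positivity) hC]
  ring

theorem stmt4 (u v w : ℝ) (hu : 3 ≤ u) (hv : 3 ≤ v) (hw : 3 ≤ w)
    (hdet : (CSmatrix u v w).det ≠ 0)
    {V : Type*} [AddCommGroup V] [Module ℝ V]
    (Bf : LinearMap.BilinForm ℝ V)
    (hsymm : ∀ x y : V, Bf x y = Bf y x)
    (a : Fin 4 → V)
    (hGram : ∀ i j : Fin 4, Bf (a i) (a j) = CSinv u v w i j)
    (h33 : CSinv u v w 3 3 ≠ 0)
    (j e q : V)
    (hj : j = a 0 - (CSinv u v w 0 3 / CSinv u v w 3 3) • a 3)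
    (he : e = a 1 - (CSinv u v w 1 3 / CSinv u v w 3 3) • a 3)
    (hq : q = a 2 - (CSinv u v w 2 3 / CSinv u v w 3 3) • a 3) :
    (Bf j j = Bf j (a 0) ∧
      Bf j (a 0) =
        (CSinv u v w 0 0 * CSinv u v w 3 3 - (CSinv u v w 0 3) ^ 2) / CSinv u v w 3 3 ∧
      (CSinv u v w 0 0 * CSinv u v w 3 3 - (CSinv u v w 0 3) ^ 2) / CSinv u v w 3 3 =
        sin (π/v) ^ 2 / ((CSmatrix u v w).det * CSinv u v w 3 3) ∧
      sin (π/v) ^ 2 / ((CSmatrix u v w).det * CSinv u v w 3 3) =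
        sin (π/v) ^ 2 / (sin (π/u) ^ 2 - cos (π/v) ^ 2)) ∧
    (Bf e e = Bf e (a 1) ∧
      Bf e (a 1) =
        (CSinv u v w 1 1 * CSinv u v w 3 3 - (CSinv u v w 1 3) ^ 2) / CSinv u v w 3 3 ∧
      (CSinv u v w 1 1 * CSinv u v w 3 3 - (CSinv u v w 1 3) ^ 2) / CSinv u v w 3 3 =
        1 / ((CSmatrix u v w).det * CSinv u v w 3 3) ∧
      1 / ((CSmatrix u v w).det * CSinv u v w 3 3) =
        1 / (sin (π/u) ^ 2 - cos (π/v) ^ 2)) ∧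
    (Bf q q = Bf q (a 2) ∧
      Bf q (a 2) =
        (CSinv u v w 2 2 * CSinv u v w 3 3 - (CSinv u v w 2 3) ^ 2) / CSinv u v w 3 3 ∧
      (CSinv u v w 2 2 * CSinv u v w 3 3 - (CSinv u v w 2 3) ^ 2) / CSinv u v w 3 3 =
        CSinv u v w 2 2 / CSinv u v w 3 3 ∧
      CSinv u v w 2 2 / CSinv u v w 3 3 =
        sin (π/u) ^ 2 / (sin (π/u) ^ 2 - cos (π/v) ^ 2)) := by
  have hE := CSinv_eq u v w hdet
  have e00 : CSinv u v w 0 0 = (1 - cos (π/v)^2 - cos (π/w)^2) / (CSmatrix u v w).det := by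
    rw [hE]; simp [CSadj, inv_mul_eq_div]
  have e03 : CSinv u v w 0 3 = (cos (π/u) * cos (π/v) * cos (π/w)) / (CSmatrix u v w).det := by
    rw [hE]; simp [CSadj, inv_mul_eq_div]
  have e30 : CSinv u v w 3 0 = (cos (π/u) * cos (π/v) * cos (π/w)) / (CSmatrix u v w).det := by
    rw [hE]; simp [CSadj, inv_mul_eq_div]
  have e11 : CSinv u v w 1 1 = (1 - cos (π/w)^2) / (CSmatrix u v w).det := by
    rw [hE]; simp [CSadj, inv_mul_eq_div]
  have e13 : CSinv u v w 1 3 = (cos (π/v) * cos (π/w)) / (CSmatrix u v w).det := by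
    rw [hE]; simp [CSadj, inv_mul_eq_div]
  have e31 : CSinv u v w 3 1 = (cos (π/v) * cos (π/w)) / (CSmatrix u v w).det := by
    rw [hE]; simp [CSadj, inv_mul_eq_div]
  have e22 : CSinv u v w 2 2 = (1 - cos (π/u)^2) / (CSmatrix u v w).det := by
    rw [hE]; simp [CSadj, inv_mul_eq_div]
  have e23 : CSinv u v w 2 3 = (cos (π/w) * (1 - cos (π/u)^2)) / (CSmatrix u v w).det := by
    rw [hE]; simp [CSadj, inv_mul_eq_div]
  have e32 : CSinv u v w 3 2 = (cos (π/w) * (1 - cos (π/u)^2)) / (CSmatrix u v w).det := by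
    rw [hE]; simp [CSadj, inv_mul_eq_div]
  have e33 : CSinv u v w 3 3 = (1 - cos (π/u)^2 - cos (π/v)^2) / (CSmatrix u v w).det := by
    rw [hE]; simp [CSadj, inv_mul_eq_div]
  have hdet' : 1 - cos (π/u)^2 - cos (π/v)^2 - cos (π/w)^2 + cos (π/u)^2 * cos (π/w)^2 ≠ 0 := by
    rw [det_CS] at hdet; exact hdet
  have hC33 : 1 - cos (π/u)^2 - cos (π/v)^2 ≠ 0 := by
    intro h; apply h33; rw [e33, h, zero_div]
  have hsu : sin (π/u) ^ 2 = 1 - cos (π/u)^2 := sin_sq _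
  have hsv : sin (π/v) ^ 2 = 1 - cos (π/v)^2 := sin_sq _
  have h30 : CSinv u v w 3 0 = CSinv u v w 0 3 := by rw [e30, e03]
  have h31 : CSinv u v w 3 1 = CSinv u v w 1 3 := by rw [e31, e13]
  have h32 : CSinv u v w 3 2 = CSinv u v w 2 3 := by rw [e32, e23]
  have hja3 : Bf j (a 3) = 0 := by
    rw [hj, LinearMap.BilinForm.sub_left, LinearMap.BilinForm.smul_left, hGram, hGram]
    exact zero_aux _ _ h33
  have hea3 : Bf e (a 3) = 0 := by
    rw [he, LinearMap.BilinForm.sub_left, LinearMap.BilinForm.smul_left, hGram, hGram]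
    exact zero_aux _ _ h33
  have hqa3 : Bf q (a 3) = 0 := by
    rw [hq, LinearMap.BilinForm.sub_left, LinearMap.BilinForm.smul_left, hGram, hGram]
    exact zero_aux _ _ h33
  refine ⟨⟨?_, ?_, ?_, ?_⟩, ⟨?_, ?_, ?_, ?_⟩, ⟨?_, ?_, ?_, ?_⟩⟩
  · nth_rewrite 2 [hj]
    rw [(Bf j).map_sub, (Bf j).map_smul, hja3, smul_zero, sub_zero]
  · rw [hj, LinearMap.BilinForm.sub_left, LinearMap.BilinForm.smul_left, hGram, hGram, h30]
    exact div_aux _ _ _ h33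
  · rw [e00, e03, e33, det_CS, hsv, mul_div_cancel₀ _ hdet']
    exact gen _ _ _ _ _ hdet' hC33 (by ring)
  · rw [e33, det_CS, hsu, hsv, mul_div_cancel₀ _ hdet']
  · nth_rewrite 2 [he]
    rw [(Bf e).map_sub, (Bf e).map_smul, hea3, smul_zero, sub_zero]
  · rw [he, LinearMap.BilinForm.sub_left, LinearMap.BilinForm.smul_left, hGram, hGram, h31]
    exact div_aux _ _ _ h33
  · rw [e11, e13, e33, det_CS, mul_div_cancel₀ _ hdet']
    exact gen _ _ _ _ _ hdet' hC33 (by ring)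
  · rw [e33, det_CS, hsu, mul_div_cancel₀ _ hdet']
  · nth_rewrite 2 [hq]
    rw [(Bf q).map_sub, (Bf q).map_smul, hqa3, smul_zero, sub_zero]
  · rw [hq, LinearMap.BilinForm.sub_left, LinearMap.BilinForm.smul_left, hGram, hGram, h32]
    exact div_aux _ _ _ h33
  · rw [e22, e23, e33, det_CS,
      gen _ _ _ _ (1 - cos (π/u)^2) hdet' hC33 (by ring)]
    field_simp
  · rw [e22, e33, det_CS, hsu]
    field_simp
end

section
/- (Distance formula (4.6), segment A₂F₀₃) Assume u = w and B < 0 (so a₂₂ < 0 and a₃₃ + a₀₃ = a₀₀ + a₀₃ < 0). Then −(a₀₂ + a₂₃)/√(2·a₂₂·(a₃₃ + a₀₃)) = cot(π/u)·√((cos(π/v) + sin²(π/u))/(2·(1 − cos(π/v)))). (This quantity is cosh of the hyperbolic distance between the vertex A₂ and the midpoint F₀₃ of the edge A₀A₃ of W_{uvw}, F₀₃ having vector a₀ + a₃.) -/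
open Real Matrix

private lemma CSdet_eq (u v : ℝ) :
    (CSmatrix u v u).det = (1 - cos (π/u)^2)^2 - cos (π/v)^2 := by
  simp [CSmatrix, Matrix.det_succ_row_zero, Fin.sum_univ_succ, Fin.succAbove]
  ring

private lemma CSinv_eq_s14 (u v : ℝ) (hB : (1 - cos (π/u)^2)^2 - cos (π/v)^2 ≠ 0) :
    CSinv u v u =
    (fun (c d B : ℝ) => !![(1-c^2-d^2)/B, c*(1-c^2)/B, c*d/B, c^2*d/B;
       c*(1-c^2)/B, (1-c^2)/B, d/B, c*d/B;
       c*d/B, d/B, (1-c^2)/B, c*(1-c^2)/B;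
       c^2*d/B, c*d/B, c*(1-c^2)/B, (1-c^2-d^2)/B])
      (cos (π/u)) (cos (π/v)) ((1 - cos (π/u)^2)^2 - cos (π/v)^2) := by
  apply Matrix.inv_eq_right_inv
  ext i j
  fin_cases i <;> fin_cases j <;>
    simp [CSmatrix, Matrix.mul_apply, Fin.sum_univ_four, Matrix.one_apply] <;>
    field_simp <;> ring

set_option maxHeartbeats 1000000 in
theorem stmt14 (u v w : ℝ) (hu : 3 ≤ u) (hv : 3 ≤ v) (hw : 3 ≤ w)
    (huw : u = w) (hBneg : (CSmatrix u v w).det < 0) :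
    CSinv u v w 2 2 < 0 ∧
    CSinv u v w 3 3 + CSinv u v w 0 3 = CSinv u v w 0 0 + CSinv u v w 0 3 ∧
    CSinv u v w 0 0 + CSinv u v w 0 3 < 0 ∧
    -(CSinv u v w 0 2 + CSinv u v w 2 3) /
        Real.sqrt (2 * CSinv u v w 2 2 * (CSinv u v w 3 3 + CSinv u v w 0 3)) =
      Real.cot (π/u) *
        Real.sqrt ((cos (π/v) + sin (π/u) ^ 2) / (2 * (1 - cos (π/v)))) := by
  subst huw
  have hu0 : (0:ℝ) < u := by linarith
  have hv0 : (0:ℝ) < v := by linarith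
  have hπ := Real.pi_pos
  have hπu : 0 < π/u := div_pos hπ hu0
  have hπu3 : π/u ≤ π/3 := by
    apply div_le_div_of_nonneg_left hπ.le (by norm_num) hu
  have hπv : 0 < π/v := div_pos hπ hv0
  have hπv3 : π/v ≤ π/3 := by
    apply div_le_div_of_nonneg_left hπ.le (by norm_num) hv
  set c := cos (π/u) with hcdef
  set d := cos (π/v) with hddef
  set s := sin (π/u) with hsdef
  have hs0 : 0 < s := sin_pos_of_pos_of_lt_pi hπu (by linarith)
  have hc0 : 0 < c := cos_pos_of_mem_Ioo ⟨by linarith, by linarith⟩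
  have hd0 : 0 < d := cos_pos_of_mem_Ioo ⟨by linarith, by linarith⟩
  have hsv : 0 < sin (π/v) := sin_pos_of_pos_of_lt_pi hπv (by linarith)
  have hd1 : d < 1 := by nlinarith [sin_sq_add_cos_sq (π/v)]
  have hpy : s^2 = 1 - c^2 := by
    have := sin_sq_add_cos_sq (π/u); linarith
  have hc2 : c^2 = 1 - s^2 := by linarith
  -- determinant
  set B := (1 - c^2)^2 - d^2 with hBdef
  have hdet : (CSmatrix u v u).det = B := CSdet_eq u v
  have hB0 : B < 0 := hdet ▸ hBneg
  have hBne : B ≠ 0 := ne_of_lt hB0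
  -- explicit inverse
  have hinv : CSinv u v u =
      !![(1-c^2-d^2)/B, c*(1-c^2)/B, c*d/B, c^2*d/B;
         c*(1-c^2)/B, (1-c^2)/B, d/B, c*d/B;
         c*d/B, d/B, (1-c^2)/B, c*(1-c^2)/B;
         c^2*d/B, c*d/B, c*(1-c^2)/B, (1-c^2-d^2)/B] := by
    exact CSinv_eq_s14 u v hBne
  have e00 : CSinv u v u 0 0 = (1-c^2-d^2)/B := by rw [hinv]; rfl
  have e02 : CSinv u v u 0 2 = c*d/B := by rw [hinv]; rfl
  have e03 : CSinv u v u 0 3 = c^2*d/B := by rw [hinv]; rfl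
  have e22 : CSinv u v u 2 2 = (1-c^2)/B := by rw [hinv]; rfl
  have e23 : CSinv u v u 2 3 = c*(1-c^2)/B := by rw [hinv]; rfl
  have e33 : CSinv u v u 3 3 = (1-c^2-d^2)/B := by rw [hinv]; rfl
  clear_value B
  rw [e00, e02, e03, e22, e23, e33]
  have hs2 : 0 < 1 - c^2 := by nlinarith
  have hnum : (1-c^2-d^2)/B + c^2*d/B = ((1-d)*(s^2+d))/B := by
    rw [← add_div]
    congr 1
    rw [hc2]; ring
  refine ⟨div_neg_of_pos_of_neg hs2 hB0, rfl, ?_, ?_⟩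
  · rw [hnum]
    apply div_neg_of_pos_of_neg _ hB0
    have : 0 < s^2 + d := by positivity
    nlinarith
  · -- main distance formula
    rw [hnum]
    have h1d : (0:ℝ) < 1 - d := by linarith
    have hds : (0:ℝ) < d + s^2 := by positivity
    set t := Real.sqrt (2*(1-d)*(d+s^2)) with htdef
    have harg : 0 < 2*(1-d)*(d+s^2) := by positivity
    have ht2 : t^2 = 2*(1-d)*(d+s^2) := Real.sq_sqrt harg.le
    have ht0 : 0 < t := Real.sqrt_pos.mpr harg
    have hBpos : 0 < -B := by linarith
    have hquot : 2 * ((1-c^2)/B) * ((1-d)*(s^2+d)/B) = (s*t/(-B))^2 := by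
      have : (s*t/(-B))^2 = s^2*t^2/B^2 := by ring
      rw [this, ht2, hpy]
      field_simp
      ring
    rw [hquot, Real.sqrt_sq (by positivity : (0:ℝ) ≤ s*t/(-B))]
    rw [Real.cot_eq_cos_div_sin, ← hcdef, ← hsdef]
    have hsplit : Real.sqrt ((d + s^2)/(2*(1-d))) =
        Real.sqrt (d + s^2) / Real.sqrt (2*(1-d)) :=
      Real.sqrt_div hds.le _
    have htsplit : t = Real.sqrt (2*(1-d)) * Real.sqrt (d+s^2) :=
      Real.sqrt_mul (by linarith) _
    have hq2 : Real.sqrt (d+s^2) ^ 2 = d + s^2 := Real.sq_sqrt hds.le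
    have hkey : c*d/B + c*(1-c^2)/B = c*(d+s^2)/B := by
      rw [hpy]; ring
    rw [hkey, hsplit, htsplit, ← hq2]
    have hp0 : 0 < Real.sqrt (2*(1-d)) := Real.sqrt_pos.mpr (by linarith)
    have hq0 : 0 < Real.sqrt (d+s^2) := Real.sqrt_pos.mpr hds
    field_simp
    linear_combination - Real.sq_sqrt (sq_nonneg (Real.sqrt (d+s^2)))
end
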